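/- Let S be a data independent memory system all of whose traces are causal, and fix n,m ≥ 1. Then every trace of S(n,m) is sequentially consistent if and only if there exists a witness Ω such that the constraint graph G(Ω)(τ) is acyclic for every unambiguous trace τ of S(n,m). -/

import Mathlib

/-- A memory operation: read or write. -/
inductive MemOp : Type
  | R : MemOp
  | W : MemOp
deriving DecidableEq

/-- A memory event ⟨op, proc, loc, data⟩. -/
structure MemEvent : Type where
  op : MemOp
  proc : ℕ
  loc : ℕ
  data : ℕ
deriving DecidableEq

instance : Inhabited MemEvent := ⟨⟨MemOp.R, 1, 1, 0⟩⟩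

/-- A trace is a finite sequence of memory events (1-indexed via `ev`). -/
abbrev MTrace := List MemEvent

/-- The x-th event of a trace (1-indexed). -/
def ev (τ : MTrace) (x : ℕ) : MemEvent := τ.getD (x - 1) default

/-- dom(τ) = {1, …, |τ|}. -/
def Dom (τ : MTrace) : Set ℕ := {x | 1 ≤ x ∧ x ≤ τ.length}

/-- P(τ,i): indices of events of processor i. -/
def Pset (τ : MTrace) (i : ℕ) : Set ℕ := {x | x ∈ Dom τ ∧ (ev τ x).proc = i}

/-- L(τ,j): indices of events to location j. -/
def Lset (τ : MTrace) (j : ℕ) : Set ℕ := {x | x ∈ Dom τ ∧ (ev τ x).loc = j}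

/-- L^w(τ,j): indices of write events to location j. -/
def Lw (τ : MTrace) (j : ℕ) : Set ℕ := {x | x ∈ Lset τ j ∧ (ev τ x).op = MemOp.W}

/-- L^r(τ,j): indices of read events to location j. -/
def Lr (τ : MTrace) (j : ℕ) : Set ℕ := {x | x ∈ Lset τ j ∧ (ev τ x).op = MemOp.R}

/-- A trace is unambiguous if every write event has a nonzero data value distinct
from that of every other write event to the same location. -/
def Unambiguous (τ : MTrace) : Prop :=
  ∀ j, ∀ x ∈ Lw τ j, (ev τ x).data ≠ 0 ∧
    ∀ y ∈ Lw τ j, y ≠ x → (ev τ y).data ≠ (ev τ x).data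

/-- A trace is causal if the data value of every read event is 0 or equals the data
value of some write event to the same location. -/
def Causal (τ : MTrace) : Prop :=
  ∀ j, ∀ x ∈ Lr τ j, (ev τ x).data = 0 ∨ ∃ y ∈ Lw τ j, (ev τ y).data = (ev τ x).data

/-- ⟨x,y⟩ ∈ M(τ,i): the total order on P(τ,i) given by index order. -/
def Mrel (τ : MTrace) (i : ℕ) (x y : ℕ) : Prop :=
  x ∈ Pset τ i ∧ y ∈ Pset τ i ∧ x < y

/-- A sequence of memory events (given by its length and 1-indexed access function)
is serial: each event's data value equals that of the latest write to the same
location at an index no larger than its own, and equals 0 if no such write exists. -/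
def SerialFn (len : ℕ) (e : ℕ → MemEvent) : Prop :=
  ∀ u, 1 ≤ u → u ≤ len →
    ((∀ k, 1 ≤ k → k ≤ u → ¬((e k).op = MemOp.W ∧ (e k).loc = (e u).loc)) →
       (e u).data = 0) ∧
    (∀ k, 1 ≤ k → k ≤ u → (e k).op = MemOp.W → (e k).loc = (e u).loc →
       (∀ k', k < k' → k' ≤ u → ¬((e k').op = MemOp.W ∧ (e k').loc = (e u).loc)) →
       (e u).data = (e k).data)

/-- f (with inverse g) is a permutation of {1,…,|τ|} satisfying conditions C1 and C2. -/
def IsSCWitness (τ : MTrace) (f g : ℕ → ℕ) : Prop :=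
  (∀ u ∈ Dom τ, f u ∈ Dom τ) ∧
  (∀ u ∈ Dom τ, g u ∈ Dom τ) ∧
  (∀ u ∈ Dom τ, g (f u) = u) ∧
  (∀ u ∈ Dom τ, f (g u) = u) ∧
  (∀ i u v, Mrel τ i u v → f u < f v) ∧
  SerialFn τ.length (fun x => ev τ (g x))

/-- A trace is sequentially consistent if some permutation satisfies C1 and C2. -/
def SeqConsistent (τ : MTrace) : Prop := ∃ f g, IsSCWitness τ f g

/-- A witness assigns to each trace and location a strict total order on L^w(τ,j). -/
def IsWitness (Ω : MTrace → ℕ → ℕ → ℕ → Prop) : Prop :=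
  ∀ τ j,
    (∀ x y, Ω τ j x y → x ∈ Lw τ j ∧ y ∈ Lw τ j) ∧
    (∀ x, ¬ Ω τ j x x) ∧
    (∀ x y z, Ω τ j x y → Ω τ j y z → Ω τ j x z) ∧
    (∀ x y, x ∈ Lw τ j → y ∈ Lw τ j → x ≠ y → Ω τ j x y ∨ Ω τ j y x)

/-- A witness is simple if it orders the writes to each location by index order. -/
def IsSimple (Ω : MTrace → ℕ → ℕ → ℕ → Prop) : Prop :=
  ∀ τ j x y, Ω τ j x y ↔ (x ∈ Lw τ j ∧ y ∈ Lw τ j ∧ x < y)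

/-- ⟨x,y⟩ ∈ Ω^e(τ,j): the extension of the witness order to all events to location j. -/
def OmegaE (Ω : MTrace → ℕ → ℕ → ℕ → Prop) (τ : MTrace) (j x y : ℕ) : Prop :=
  x ∈ Lset τ j ∧ y ∈ Lset τ j ∧
  (((ev τ x).data = (ev τ y).data ∧ (ev τ x).op = MemOp.W ∧ (ev τ y).op = MemOp.R) ∨
   ((ev τ x).data = 0 ∧ (ev τ y).data ≠ 0) ∨
   (∃ a b, a ∈ Lw τ j ∧ b ∈ Lw τ j ∧ Ω τ j a b ∧
      (ev τ a).data = (ev τ x).data ∧ (ev τ b).data = (ev τ y).data))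

/-- Edge of the constraint graph G(Ω)(τ): union of the M(τ,i) and the Ω^e(τ,j). -/
def GEdge (Ω : MTrace → ℕ → ℕ → ℕ → Prop) (τ : MTrace) (x y : ℕ) : Prop :=
  (∃ i, Mrel τ i x y) ∨ (∃ j, OmegaE Ω τ j x y)

/-- The constraint graph G(Ω)(τ) has a cycle. -/
def HasCycle (Ω : MTrace → ℕ → ℕ → ℕ → Prop) (τ : MTrace) : Prop :=
  ∃ x, Relation.TransGen (GEdge Ω τ) x x

/-- The constraint graph G(Ω)(τ) is acyclic. -/
def Acyclic (Ω : MTrace → ℕ → ℕ → ℕ → Prop) (τ : MTrace) : Prop :=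
  ¬ HasCycle Ω τ

/-- All events of the trace have processor in {1,…,n} and location in {1,…,m}. -/
def InRange (n m : ℕ) (τ : MTrace) : Prop :=
  ∀ e ∈ τ, 1 ≤ e.proc ∧ e.proc ≤ n ∧ 1 ≤ e.loc ∧ e.loc ≤ m

/-- All data values in the trace lie in {0,…,v}. -/
def DataBounded (v : ℕ) (τ : MTrace) : Prop := ∀ e ∈ τ, e.data ≤ v

/-- A memory system with n processors and m locations: for each v ≥ 1, a set S(n,m,v)
of traces whose processors, locations, and data values are in range. -/
structure MemSystem (n m : ℕ) : Type where
  S : ℕ → Set MTrace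
  wf : ∀ v, 1 ≤ v → ∀ τ ∈ S v, InRange n m τ ∧ DataBounded v τ

/-- S(n,m): the union of the S(n,m,v) over v ≥ 1. -/
def MemSystem.traces {n m : ℕ} (M : MemSystem n m) : Set MTrace :=
  {τ | ∃ v, 1 ≤ v ∧ τ ∈ M.S v}

/-- A renaming function λ with λ(j,0) = 0 for every location j. -/
def IsRenaming (lam : ℕ → ℕ → ℕ) : Prop := ∀ j, lam j 0 = 0

/-- λ^d: rename the data value of each event according to its location. -/
def renameD (lam : ℕ → ℕ → ℕ) (τ : MTrace) : MTrace :=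
  τ.map fun e => { e with data := lam e.loc e.data }

/-- The memory system is data independent: a trace is in S(n,m,v) iff it is obtained
from an unambiguous trace of S(n,m) by a renaming function with values in {0,…,v}. -/
def DataIndependent {n m : ℕ} (M : MemSystem n m) : Prop :=
  ∀ v, 1 ≤ v → ∀ τ, τ ∈ M.S v ↔
    ∃ τ' lam, τ' ∈ M.traces ∧ Unambiguous τ' ∧ IsRenaming lam ∧
      (∀ j d, lam j d ≤ v) ∧ τ = renameD lam τ'

/-- λ^p: rename the processor of each event. -/
def renameP (lam : ℕ → ℕ) (τ : MTrace) : MTrace :=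
  τ.map fun e => { e with proc := lam e.proc }

/-- λ^l: rename the location of each event. -/
def renameL (lam : ℕ → ℕ) (τ : MTrace) : MTrace :=
  τ.map fun e => { e with loc := lam e.loc }

/-- λ is a permutation of {1,…,n}. -/
def PermOn (n : ℕ) (lam : ℕ → ℕ) : Prop :=
  Set.BijOn lam (Set.Icc 1 n) (Set.Icc 1 n)

/-- The memory system is processor symmetric. -/
def ProcSymmetric {n m : ℕ} (M : MemSystem n m) : Prop :=
  ∀ lam, PermOn n lam → ∀ v τ, τ ∈ M.S v → renameP lam τ ∈ M.S v

/-- The memory system is location symmetric. -/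
def LocSymmetric {n m : ℕ} (M : MemSystem n m) : Prop :=
  ∀ lam, PermOn m lam → ∀ v τ, τ ∈ M.S v → renameL lam τ ∈ M.S v

/-- x ⊕ 1 in the cyclic group {1,…,k} with identity k. -/
def cyc (k x : ℕ) : ℕ := if x = k then 1 else x + 1

/-- A k-nice cycle u_1,v_1,…,u_k,v_k in G(Ω)(τ): distinct vertices; each ⟨u_x,v_x⟩
is a processor edge, each ⟨v_x,u_{x⊕1}⟩ a location edge; no processor (resp.
location) contributes two edges. -/
def NiceCycle (Ω : MTrace → ℕ → ℕ → ℕ → Prop) (τ : MTrace) (k : ℕ)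
    (u v : ℕ → ℕ) : Prop :=
  1 ≤ k ∧
  (∀ x ∈ Set.Icc 1 k, ∀ y ∈ Set.Icc 1 k, x ≠ y → u x ≠ u y) ∧
  (∀ x ∈ Set.Icc 1 k, ∀ y ∈ Set.Icc 1 k, x ≠ y → v x ≠ v y) ∧
  (∀ x ∈ Set.Icc 1 k, ∀ y ∈ Set.Icc 1 k, u x ≠ v y) ∧
  (∀ x ∈ Set.Icc 1 k, ∃ i, Mrel τ i (u x) (v x)) ∧
  (∀ x ∈ Set.Icc 1 k, ∃ j, OmegaE Ω τ j (v x) (u (cyc k x))) ∧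
  (∀ x ∈ Set.Icc 1 k, ∀ y ∈ Set.Icc 1 k, x ≠ y → ∀ i,
     Mrel τ i (u x) (v x) → ¬ Mrel τ i (u y) (v y)) ∧
  (∀ x ∈ Set.Icc 1 k, ∀ y ∈ Set.Icc 1 k, x ≠ y → ∀ j,
     OmegaE Ω τ j (v x) (u (cyc k x)) → ¬ OmegaE Ω τ j (v y) (u (cyc k y)))

/-- A canonical k-nice cycle: a k-nice cycle whose processor edges are in M(τ,x) and
whose location edges are in Ω^e(τ,x⊕1), for x = 1,…,k. -/
def CanonicalNiceCycle (Ω : MTrace → ℕ → ℕ → ℕ → Prop) (τ : MTrace) (k : ℕ)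
    (u v : ℕ → ℕ) : Prop :=
  NiceCycle Ω τ k u v ∧
  (∀ x ∈ Set.Icc 1 k, Mrel τ x (u x) (v x)) ∧
  (∀ x ∈ Set.Icc 1 k, OmegaE Ω τ (cyc k x) (v x) (u (cyc k x)))

/-- The trace satisfies the automaton Constrain_k(j). -/
def ConstrainK (k j : ℕ) (τ : MTrace) : Prop :=
  (j ≤ k →
    (∀ x ∈ Lw τ j, (ev τ x).data ≤ 2) ∧
    (∀ x ∈ Lw τ j, ∀ y ∈ Lw τ j, (ev τ x).data = 1 → (ev τ y).data = 1 → x = y) ∧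
    (∀ x ∈ Lw τ j, ∀ y ∈ Lw τ j, (ev τ x).data = 0 → (ev τ y).data ≠ 0 → x < y) ∧
    (∀ y ∈ Lw τ j, (ev τ y).data = 2 → ∃ x ∈ Lw τ j, (ev τ x).data = 1 ∧ x < y)) ∧
  (k < j → ∀ x ∈ Lw τ j, (ev τ x).data = 0)

/-- The trace satisfies the automaton Check_k(i). -/
def CheckK (k i : ℕ) (τ : MTrace) : Prop :=
  ∃ x ∈ Dom τ, ∃ y ∈ Dom τ, x < y ∧
    (ev τ x).proc = i ∧ (ev τ x).loc = i ∧
    ((ev τ x).data = 1 ∨ (ev τ x).data = 2) ∧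
    (ev τ y).proc = i ∧ (ev τ y).loc = cyc k i ∧
    ((ev τ y).data = 0 ∨ ((ev τ y).op = MemOp.W ∧ (ev τ y).data = 1))


lemma ev_renameD {lam : ℕ → ℕ → ℕ} (hlam : IsRenaming lam) (τ : MTrace) (x : ℕ) :
    ev (renameD lam τ) x =
      { ev τ x with data := lam (ev τ x).loc (ev τ x).data } := by
  unfold ev renameD
  rcases Nat.lt_or_ge (x - 1) τ.length with h | h
  · rw [List.getD_eq_getElem?_getD, List.getD_eq_getElem?_getD,
      List.getElem?_map, List.getElem?_eq_getElem h]
    rfl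
  · rw [List.getD_eq_getElem?_getD, List.getD_eq_getElem?_getD,
      List.getElem?_map, List.getElem?_eq_none (by simpa using h)]
    simp only [Option.map_none, Option.getD_none]
    show (default : MemEvent) = ⟨MemOp.R, 1, 1, lam 1 0⟩
    rw [hlam 1]; rfl

lemma exists_write_le {τ : MTrace} {f g : ℕ → ℕ} (hw : IsSCWitness τ f g)
    {x j : ℕ} (hx : x ∈ Lset τ j) (hd : (ev τ x).data ≠ 0) :
    ∃ w ∈ Lw τ j, f w ≤ f x := by
  obtain ⟨hf, hg, hgf, hfg, hM, hS⟩ := hw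
  have hxD : x ∈ Dom τ := hx.1
  have hfx : f x ∈ Dom τ := hf x hxD
  have h1 := (hS (f x) hfx.1 hfx.2).1
  simp only [hgf x hxD] at h1
  by_contra hcon
  push_neg at hcon
  apply hd
  apply h1
  intro k h1k hk hbad
  have hkD : k ∈ Dom τ := ⟨h1k, le_trans hk hfx.2⟩
  have hgkD : g k ∈ Dom τ := hg k hkD
  have hmem : g k ∈ Lw τ j := ⟨⟨hgkD, by rw [hbad.2, hx.2]⟩, hbad.1⟩
  have := hcon (g k) hmem
  rw [hfg k hkD] at this
  omega

open Classical in
lemma latest_write {τ : MTrace} {f g : ℕ → ℕ} (hw : IsSCWitness τ f g)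
    {x j : ℕ} (hx : x ∈ Lset τ j) {w0 : ℕ} (hw0 : w0 ∈ Lw τ j) (hle : f w0 ≤ f x) :
    ∃ a ∈ Lw τ j, (ev τ a).data = (ev τ x).data ∧ f a ≤ f x ∧
      ∀ w ∈ Lw τ j, f a < f w → f x < f w := by
  obtain ⟨hf, hg, hgf, hfg, hM, hS⟩ := hw
  have hxD : x ∈ Dom τ := hx.1
  have hfx : f x ∈ Dom τ := hf x hxD
  set S : Finset ℕ := (Finset.Icc 1 (f x)).filter
    (fun k => (ev τ (g k)).op = MemOp.W ∧ (ev τ (g k)).loc = j) with hSdef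
  have hmemS : ∀ w ∈ Lw τ j, f w ≤ f x → f w ∈ S := by
    intro w hwj hwle
    have hwD : w ∈ Dom τ := hwj.1.1
    have hfwD : f w ∈ Dom τ := hf w hwD
    rw [hSdef, Finset.mem_filter, Finset.mem_Icc]
    refine ⟨⟨hfwD.1, hwle⟩, ?_, ?_⟩ <;> rw [hgf w hwD]
    · exact hwj.2
    · exact hwj.1.2
  have hne : S.Nonempty := ⟨f w0, hmemS w0 hw0 hle⟩
  set K := S.max' hne with hKdef
  have hKS : K ∈ S := S.max'_mem hne
  rw [hSdef, Finset.mem_filter, Finset.mem_Icc] at hKS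
  have hKD : K ∈ Dom τ := ⟨hKS.1.1, le_trans hKS.1.2 hfx.2⟩
  have hgKD : g K ∈ Dom τ := hg K hKD
  have haLw : g K ∈ Lw τ j := ⟨⟨hgKD, hKS.2.2⟩, hKS.2.1⟩
  have h2 := (hS (f x) hfx.1 hfx.2).2 K hKS.1.1 hKS.1.2
  simp only [hgf x hxD] at h2
  have hdata : (ev τ (g K)).data = (ev τ x).data := by
    have := h2 hKS.2.1 (by rw [hKS.2.2, hx.2]) ?_
    · exact this.symm
    · intro k' hk'1 hk'2 hbad
      have hk'S : k' ∈ S := by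
        rw [hSdef, Finset.mem_filter, Finset.mem_Icc]
        exact ⟨⟨le_trans hKS.1.1 (le_of_lt hk'1), hk'2⟩, hbad.1, by rw [hbad.2, hx.2]⟩
      have := S.le_max' k' hk'S
      omega
  refine ⟨g K, haLw, hdata, by rw [hfg K hKD]; exact hKS.1.2, ?_⟩
  intro w hwj hlt
  by_contra hcon
  push_neg at hcon
  have := S.le_max' (f w) (hmemS w hwj hcon)
  rw [hfg K hKD] at hlt
  omega

lemma unamb_unique {τ : MTrace} (hU : Unambiguous τ) {j a b : ℕ}
    (ha : a ∈ Lw τ j) (hb : b ∈ Lw τ j)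
    (hd : (ev τ a).data = (ev τ b).data) : a = b := by
  by_contra hne
  exact (hU j b hb).2 a ha hne hd

lemma latest_of_ne_zero {τ : MTrace} {f g : ℕ → ℕ} (hw : IsSCWitness τ f g)
    {x j : ℕ} (hx : x ∈ Lset τ j) (hd : (ev τ x).data ≠ 0) :
    ∃ a ∈ Lw τ j, (ev τ a).data = (ev τ x).data ∧ f a ≤ f x ∧
      ∀ w ∈ Lw τ j, f a < f w → f x < f w := by
  obtain ⟨w0, hw0, hle⟩ := exists_write_le hw hx hd
  exact latest_write hw hx hw0 hle

lemma fwd_edge {τ : MTrace} {f g : ℕ → ℕ} (hw : IsSCWitness τ f g)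
    (hU : Unambiguous τ)
    {Ω : MTrace → ℕ → ℕ → ℕ → Prop}
    (hΩf : ∀ j a b, Ω τ j a b → a ∈ Lw τ j ∧ b ∈ Lw τ j ∧ f a < f b)
    {x y : ℕ} (h : GEdge Ω τ x y) : f x < f y := by
  have hfinj : ∀ u ∈ Dom τ, ∀ v ∈ Dom τ, f u = f v → u = v := by
    intro u hu v hv huv
    have := hw.2.2.1 u hu
    rw [huv, hw.2.2.1 v hv] at this
    exact this.symm
  rcases h with ⟨i, hM⟩ | ⟨j, hxL, hyL, hcase⟩
  · exact hw.2.2.2.2.1 i x y hM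
  rcases hcase with ⟨hd, hwx, hry⟩ | ⟨h0, hny⟩ | ⟨a, b, ha, hb, hab, hdax, hdby⟩
  · -- write/read same data
    have hxLw : x ∈ Lw τ j := ⟨hxL, hwx⟩
    have hdx : (ev τ x).data ≠ 0 := (hU j x hxLw).1
    have hdy : (ev τ y).data ≠ 0 := by rw [← hd]; exact hdx
    obtain ⟨a, haLw, hda, hale, _⟩ := latest_of_ne_zero hw hyL hdy
    have hax : a = x := unamb_unique hU haLw hxLw (by rw [hda, hd])
    rw [hax] at hale
    have hne : x ≠ y := by
      intro hxy; rw [hxy, hry] at hwx; exact MemOp.noConfusion hwx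
    have : f x ≠ f y := fun hc => hne (hfinj x hxL.1 y hyL.1 hc)
    omega
  · -- data x = 0, data y ≠ 0
    obtain ⟨a, haLw, hda, hale, _⟩ := latest_of_ne_zero hw hyL hny
    have : f x < f a := by
      by_contra hcon
      push_neg at hcon
      obtain ⟨a', ha'Lw, hda', _, _⟩ := latest_write hw hxL haLw hcon
      rw [h0] at hda'
      exact (hU j a' ha'Lw).1 hda'
    omega
  · -- via witness order
    obtain ⟨haLw, hbLw, hfab⟩ := hΩf j a b hab
    have hdx : (ev τ x).data ≠ 0 := by rw [← hdax]; exact (hU j a haLw).1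
    have hdy : (ev τ y).data ≠ 0 := by rw [← hdby]; exact (hU j b hbLw).1
    obtain ⟨a', ha'Lw, hda', ha'le, ha'max⟩ := latest_of_ne_zero hw hxL hdx
    have haa : a' = a := unamb_unique hU ha'Lw haLw (by rw [hda', ← hdax])
    rw [haa] at ha'le ha'max
    obtain ⟨b', hb'Lw, hdb', hb'le, _⟩ := latest_of_ne_zero hw hyL hdy
    have hbb : b' = b := unamb_unique hU hb'Lw hbLw (by rw [hdb', ← hdby])
    rw [hbb] at hb'le
    exact lt_of_lt_of_le (ha'max b hbLw hfab) hb'le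

open Classical in
noncomputable def scF (τ : MTrace) : ℕ → ℕ :=
  if h : SeqConsistent τ then h.choose else id

lemma scF_spec {τ : MTrace} (h : SeqConsistent τ) : ∃ g, IsSCWitness τ (scF τ) g := by
  rw [scF, dif_pos h]
  exact h.choose_spec

lemma scF_inj (τ : MTrace) : ∀ u ∈ Dom τ, ∀ v ∈ Dom τ, scF τ u = scF τ v → u = v := by
  intro u hu v hv huv
  by_cases h : SeqConsistent τ
  · obtain ⟨g, hw⟩ := scF_spec h
    have := hw.2.2.1 u hu
    rw [huv, hw.2.2.1 v hv] at this
    exact this.symm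
  · rw [scF, dif_neg h] at huv
    exact huv

lemma forward_witness (T : Set MTrace) (hSC : ∀ τ ∈ T, SeqConsistent τ) :
    ∃ Ω, IsWitness Ω ∧ ∀ τ ∈ T, Unambiguous τ → Acyclic Ω τ := by
  refine ⟨fun τ j x y => x ∈ Lw τ j ∧ y ∈ Lw τ j ∧ scF τ x < scF τ y, ?_, ?_⟩
  · intro τ j
    refine ⟨fun x y h => ⟨h.1, h.2.1⟩, fun x h => lt_irrefl _ h.2.2, ?_, ?_⟩
    · intro x y z h1 h2
      exact ⟨h1.1, h2.2.1, lt_trans h1.2.2 h2.2.2⟩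
    · intro x y hx hy hne
      have : scF τ x ≠ scF τ y := fun hc => hne (scF_inj τ x hx.1.1 y hy.1.1 hc)
      rcases lt_or_gt_of_ne this with h | h
      · exact Or.inl ⟨hx, hy, h⟩
      · exact Or.inr ⟨hy, hx, h⟩
  · intro τ hτ hU ⟨x, hcyc⟩
    obtain ⟨g, hw⟩ := scF_spec (hSC τ hτ)
    have hedge : ∀ u v, GEdge (fun τ j x y => x ∈ Lw τ j ∧ y ∈ Lw τ j ∧ scF τ x < scF τ y) τ u v →
        scF τ u < scF τ v := by
      intro u v h
      exact fwd_edge hw hU (fun j a b hab => hab) h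
    have : ∀ y, Relation.TransGen (GEdge (fun τ j x y => x ∈ Lw τ j ∧ y ∈ Lw τ j ∧ scF τ x < scF τ y) τ) x y → scF τ x < scF τ y := by
      intro y h
      induction h with
      | single h => exact hedge _ _ h
      | tail _ h ih => exact lt_trans ih (hedge _ _ h)
    exact lt_irrefl _ (this x hcyc)

lemma topo_sort (len : ℕ) (r : ℕ → ℕ → Prop)
    (hdom : ∀ x y, r x y → (1 ≤ x ∧ x ≤ len) ∧ (1 ≤ y ∧ y ≤ len))
    (hacyc : ∀ x, ¬ Relation.TransGen r x x) :
    ∃ f g : ℕ → ℕ, (∀ u, 1 ≤ u → u ≤ len → 1 ≤ f u ∧ f u ≤ len) ∧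
      (∀ u, 1 ≤ u → u ≤ len → 1 ≤ g u ∧ g u ≤ len) ∧
      (∀ u, 1 ≤ u → u ≤ len → g (f u) = u) ∧
      (∀ u, 1 ≤ u → u ≤ len → f (g u) = u) ∧
      (∀ x y, r x y → f x < f y) := by
  classical
  set rr := Relation.TransGen r with hrr
  have hrrtrans : ∀ {a b c}, rr a b → rr b c → rr a c := fun h1 h2 => h1.trans h2
  set le : ℕ → ℕ → Prop := fun x y => rr x y ∨ x = y with hle
  haveI : IsRefl ℕ le := ⟨fun a => Or.inr rfl⟩
  haveI : IsTrans ℕ le := by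
    constructor
    rintro a b c (h1 | rfl) (h2 | rfl)
    · exact Or.inl (hrrtrans h1 h2)
    · exact Or.inl h1
    · exact Or.inl h2
    · exact Or.inr rfl
  haveI : IsAntisymm ℕ le := by
    constructor
    rintro a b (h1 | rfl) (h2 | h2)
    · exact absurd (hrrtrans h1 h2) (hacyc a)
    · exact h2.symm
    · rfl
    · rfl
  haveI : IsPreorder ℕ le := ⟨⟩
  haveI : IsPartialOrder ℕ le := ⟨⟩
  obtain ⟨s, hs, hles⟩ := extend_partialOrder le
  have htrans : ∀ {a b c}, s a b → s b c → s a c :=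
    fun h1 h2 => hs.toIsPartialOrder.toIsPreorder.toIsTrans.trans _ _ _ h1 h2
  have hanti : ∀ {a b}, s a b → s b a → a = b :=
    fun h1 h2 => hs.toIsPartialOrder.toAntisymm.antisymm _ _ h1 h2
  have htot : ∀ a b, s a b ∨ s b a := fun a b => hs.toTotal.total a b
  set s' : ℕ → ℕ → Prop := fun x y => s x y ∧ x ≠ y with hs'def
  have hrs' : ∀ {x y}, rr x y → s' x y := by
    intro x y h
    refine ⟨hles x y (Or.inl h), ?_⟩
    rintro rfl
    exact hacyc x h
  have hs'trans : ∀ {a b c}, s' a b → s' b c → s' a c := by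
    rintro a b c ⟨h1, hne1⟩ ⟨h2, hne2⟩
    refine ⟨htrans h1 h2, ?_⟩
    rintro rfl
    exact hne1 (hanti h1 h2)
  have hs'tot : ∀ a b, a ≠ b → s' a b ∨ s' b a := by
    intro a b hne
    rcases htot a b with h | h
    · exact Or.inl ⟨h, hne⟩
    · exact Or.inr ⟨h, hne.symm⟩
  set I : Finset ℕ := Finset.Icc 1 len with hIdef
  have hIcard : I.card = len := by rw [hIdef, Nat.card_Icc]; omega
  set f : ℕ → ℕ := fun u => if 1 ≤ u ∧ u ≤ len then (I.filter (fun z => s' z u)).card + 1 else u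
    with hfdef
  have hfval : ∀ u, 1 ≤ u → u ≤ len → f u = (I.filter (fun z => s' z u)).card + 1 := by
    intro u h1 h2
    rw [hfdef]
    simp only [if_pos (And.intro h1 h2)]
  have hfmem : ∀ u, 1 ≤ u → u ≤ len → 1 ≤ f u ∧ f u ≤ len := by
    intro u h1 h2
    rw [hfval u h1 h2]
    have hsub : I.filter (fun z => s' z u) ⊆ I.erase u := by
      intro z hz
      rw [Finset.mem_filter] at hz
      exact Finset.mem_erase.2 ⟨hz.2.2, hz.1⟩
    have hcard := Finset.card_le_card hsub
    rw [Finset.card_erase_of_mem (by rw [hIdef]; exact Finset.mem_Icc.2 ⟨h1, h2⟩), hIcard] at hcard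
    omega
  have hfmono : ∀ u v, 1 ≤ u → u ≤ len → 1 ≤ v → v ≤ len → s' u v → f u < f v := by
    intro u v hu1 hu2 hv1 hv2 huv
    rw [hfval u hu1 hu2, hfval v hv1 hv2]
    have hss : I.filter (fun z => s' z u) ⊂ I.filter (fun z => s' z v) := by
      refine ⟨fun z hz => ?_, fun hcon => ?_⟩
      · rw [Finset.mem_filter] at hz ⊢
        exact ⟨hz.1, hs'trans hz.2 huv⟩
      · have hu : u ∈ I.filter (fun z => s' z v) := by
          rw [Finset.mem_filter]
          exact ⟨by rw [hIdef]; exact Finset.mem_Icc.2 ⟨hu1, hu2⟩, huv⟩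
        have := hcon hu
        rw [Finset.mem_filter] at this
        exact this.2.2 rfl
    have := Finset.card_lt_card hss
    omega
  have hfinj : ∀ u v, 1 ≤ u → u ≤ len → 1 ≤ v → v ≤ len → f u = f v → u = v := by
    intro u v hu1 hu2 hv1 hv2 heq
    by_contra hne
    rcases hs'tot u v hne with h | h
    · exact absurd heq (Nat.ne_of_lt (hfmono u v hu1 hu2 hv1 hv2 h))
    · exact absurd heq.symm (Nat.ne_of_lt (hfmono v u hv1 hv2 hu1 hu2 h))
  have hsurj : ∀ y, 1 ≤ y → y ≤ len → ∃ u, (1 ≤ u ∧ u ≤ len) ∧ f u = y := by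
    intro y hy1 hy2
    have himg : I.image f = I := by
      apply Finset.eq_of_subset_of_card_le
      · intro z hz
        rw [Finset.mem_image] at hz
        obtain ⟨u, hu, rfl⟩ := hz
        rw [hIdef, Finset.mem_Icc] at hu ⊢
        exact hfmem u hu.1 hu.2
      · have hinj2 : Set.InjOn f ↑I := by
          intro a ha b hb hab
          rw [hIdef, Finset.coe_Icc, Set.mem_Icc] at ha hb
          exact hfinj a b ha.1 ha.2 hb.1 hb.2 hab
        rw [Finset.card_image_of_injOn hinj2]
    have hyI : y ∈ I.image f := by
      rw [himg, hIdef, Finset.mem_Icc]; exact ⟨hy1, hy2⟩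
    rw [Finset.mem_image] at hyI
    obtain ⟨u, hu, huy⟩ := hyI
    rw [hIdef, Finset.mem_Icc] at hu
    exact ⟨u, hu, huy⟩
  set g : ℕ → ℕ := fun y => if h : ∃ u, (1 ≤ u ∧ u ≤ len) ∧ f u = y then h.choose else y
    with hgdef
  have hgval : ∀ y, 1 ≤ y → y ≤ len → (1 ≤ g y ∧ g y ≤ len) ∧ f (g y) = y := by
    intro y hy1 hy2
    have h := hsurj y hy1 hy2
    rw [hgdef]
    simp only [dif_pos h]
    exact h.choose_spec
  refine ⟨f, g, hfmem, fun u h1 h2 => (hgval u h1 h2).1, ?_, fun u h1 h2 => (hgval u h1 h2).2, ?_⟩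
  · intro u h1 h2
    obtain ⟨hfu1, hfu2⟩ := hfmem u h1 h2
    obtain ⟨⟨hg1, hg2⟩, hfg⟩ := hgval (f u) hfu1 hfu2
    exact hfinj _ _ hg1 hg2 h1 h2 hfg
  · intro x y hxy
    obtain ⟨⟨hx1, hx2⟩, hy1, hy2⟩ := hdom x y hxy
    exact hfmono x y hx1 hx2 hy1 hy2 (hrs' (Relation.TransGen.single hxy))

lemma backward_sc {Ω : MTrace → ℕ → ℕ → ℕ → Prop} (hΩ : IsWitness Ω)
    {τ' : MTrace} (hU : Unambiguous τ') (hCa : Causal τ') (hAc : Acyclic Ω τ')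
    {lam : ℕ → ℕ → ℕ} (hlam : IsRenaming lam) : SeqConsistent (renameD lam τ') := by
  classical
  set τ : MTrace := renameD lam τ' with hτdef
  have hlen : τ.length = τ'.length := List.length_map _
  have hev : ∀ x, ev τ x = { ev τ' x with data := lam (ev τ' x).loc (ev τ' x).data } :=
    ev_renameD hlam τ'
  have hop : ∀ x, (ev τ x).op = (ev τ' x).op := fun x => by rw [hev x]
  have hloc : ∀ x, (ev τ x).loc = (ev τ' x).loc := fun x => by rw [hev x]
  have hproc : ∀ x, (ev τ x).proc = (ev τ' x).proc := fun x => by rw [hev x]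
  have hdata : ∀ x, (ev τ x).data = lam (ev τ' x).loc (ev τ' x).data := fun x => by rw [hev x]
  have hGEdom : ∀ x y, GEdge Ω τ' x y →
      (1 ≤ x ∧ x ≤ τ'.length) ∧ (1 ≤ y ∧ y ≤ τ'.length) := by
    rintro x y (⟨i, hx, hy, _⟩ | ⟨j, hx, hy, _⟩) <;> exact ⟨hx.1, hy.1⟩
  have hacyc : ∀ x, ¬ Relation.TransGen (GEdge Ω τ') x x := fun x hx => hAc ⟨x, hx⟩
  obtain ⟨f, g, hfm, hgm, hgf, hfg, hedge⟩ := topo_sort τ'.length (GEdge Ω τ') hGEdom hacyc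
  have hDom : ∀ x, x ∈ Dom τ ↔ (1 ≤ x ∧ x ≤ τ'.length) := by
    intro x; rw [Dom, hlen]; rfl
  refine ⟨f, g, ?_, ?_, ?_, ?_, ?_, ?_⟩
  · intro u hu; rw [hDom] at *; exact hfm u hu.1 hu.2
  · intro u hu; rw [hDom] at *; exact hgm u hu.1 hu.2
  · intro u hu; rw [hDom] at hu; exact hgf u hu.1 hu.2
  · intro u hu; rw [hDom] at hu; exact hfg u hu.1 hu.2
  · -- C1
    rintro i u v ⟨⟨huD, hup⟩, ⟨hvD, hvp⟩, huv⟩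
    rw [hDom] at huD hvD
    apply hedge
    exact Or.inl ⟨i, ⟨huD, by rw [← hproc u]; exact hup⟩, ⟨hvD, by rw [← hproc v]; exact hvp⟩, huv⟩
  · -- Serial
    rw [hlen]
    intro u h1u huL
    set x := g u with hxdef
    have hxD : 1 ≤ x ∧ x ≤ τ'.length := hgm u h1u huL
    have hfx : f x = u := hfg u h1u huL
    set j := (ev τ' x).loc with hjdef
    have hxLset : x ∈ Lset τ' j := ⟨hxD, rfl⟩
    have key : (ev τ' x).data ≠ 0 →
        ∃ a ∈ Lw τ' j, (ev τ' a).data = (ev τ' x).data ∧ f a ≤ u := by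
      intro hd
      cases hopx : (ev τ' x).op with
      | W => exact ⟨x, ⟨hxLset, hopx⟩, rfl, le_of_eq hfx⟩
      | R =>
        rcases hCa j x ⟨hxLset, hopx⟩ with h0 | ⟨a, haLw, hda⟩
        · exact absurd h0 hd
        · refine ⟨a, haLw, hda, ?_⟩
          have : f a < f x := hedge a x (Or.inr ⟨j, haLw.1, hxLset, Or.inl ⟨hda, haLw.2, hopx⟩⟩)
          omega
    constructor
    · -- clause 1
      intro H
      rw [hdata x]
      suffices hz : (ev τ' x).data = 0 by rw [hz]; exact hlam _
      by_contra hd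
      obtain ⟨a, haLw, hda, hfa⟩ := key hd
      have haD : 1 ≤ a ∧ a ≤ τ'.length := haLw.1.1
      have hfaD := hfm a haD.1 haD.2
      refine H (f a) hfaD.1 hfa ⟨?_, ?_⟩
      · rw [hop, hgf a haD.1 haD.2]; exact haLw.2
      · rw [hloc, hloc, hgf a haD.1 haD.2]; exact haLw.1.2
    · -- clause 2
      intro k h1k hku hkop hkloc hnone
      set w := g k with hwdef
      have hkD : 1 ≤ k ∧ k ≤ τ'.length := ⟨h1k, le_trans hku huL⟩
      have hwD : 1 ≤ w ∧ w ≤ τ'.length := hgm k hkD.1 hkD.2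
      have hfw : f w = k := hfg k hkD.1 hkD.2
      rw [hop] at hkop
      rw [hloc, hloc] at hkloc
      have hwLw : w ∈ Lw τ' j := ⟨⟨hwD, hkloc⟩, hkop⟩
      rw [hdata, hdata, hkloc]
      suffices hdd : (ev τ' x).data = (ev τ' w).data by rw [hdd]
      by_cases hd : (ev τ' x).data = 0
      · exfalso
        have : f x < f w := hedge x w
          (Or.inr ⟨j, hxLset, hwLw.1, Or.inr (Or.inl ⟨hd, (hU j w hwLw).1⟩)⟩)
        omega
      · obtain ⟨a, haLw, hda, hfa⟩ := key hd
        have haD : 1 ≤ a ∧ a ≤ τ'.length := haLw.1.1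
        have hka : k ≤ f a := by
          by_contra hcon
          push_neg at hcon
          have hne : a ≠ w := by
            intro h; rw [h, hfw] at hcon; omega
          rcases (hΩ τ' j).2.2.2 a w haLw hwLw hne with hab | hba
          · have : f x < f w := hedge x w
              (Or.inr ⟨j, hxLset, hwLw.1, Or.inr (Or.inr ⟨a, w, haLw, hwLw, hab, hda, rfl⟩)⟩)
            omega
          · have : f w < f a := hedge w a
              (Or.inr ⟨j, hwLw.1, haLw.1, Or.inr (Or.inr ⟨w, a, hwLw, haLw, hba, rfl, rfl⟩)⟩)
            omega
        rcases eq_or_lt_of_le hka with heq | hlt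
        · have : w = a := by
            rw [hwdef, heq, hgf a haD.1 haD.2]
          rw [this]; exact hda.symm
        · exfalso
          refine hnone (f a) hlt hfa ⟨?_, ?_⟩
          · rw [hop, hgf a haD.1 haD.2]; exact haLw.2
          · rw [hloc, hloc, hgf a haD.1 haD.2]; exact haLw.1.2

/-- For a data independent memory system all of whose traces are causal,
every trace of S(n,m) is sequentially consistent iff there is a witness Ω such that
G(Ω)(τ) is acyclic for every unambiguous trace τ of S(n,m). -/
theorem sc_iff_witness_acyclic
    (n m : ℕ) (hn : 1 ≤ n) (hm : 1 ≤ m)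
    (M : MemSystem n m) (hDI : DataIndependent M) (hC : ∀ τ ∈ M.traces, Causal τ) :
    (∀ τ ∈ M.traces, SeqConsistent τ) ↔
      (∃ Ω, IsWitness Ω ∧ ∀ τ ∈ M.traces, Unambiguous τ → Acyclic Ω τ) := by
  constructor
  · intro hSC
    exact forward_witness M.traces hSC
  · rintro ⟨Ω, hΩ, hAc⟩ τ hτ
    obtain ⟨v, hv, hτv⟩ := hτ
    obtain ⟨τ', lam, hτ', hU', hlam, hbound, heq⟩ := (hDI v hv τ).1 hτv
    rw [heq]
    exact backward_sc hΩ hU' (hC τ' hτ') (hAc τ' hτ' hU') hlam
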